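/- The two-variable Rogers-Szegő polynomials satisfy H_{n+1}(t_1, t_2) = (1 + t_1 + t_2)H_n(t_1,t_2) + (t_1 t_2 + t_1 + t_2)(q^n - 1)H_{n-1}(t_1,t_2) + t_1 t_2 (q^n - 1)(q^{n-1} - 1)H_{n-2}(t_1,t_2) for n ≥ 2. -/

import Mathlib

/-- `(q)_n = (1-q)(1-q^2)⋯(1-q^n)`, with `(q)_0 = 1`. -/
noncomputable def qPoch {K : Type*} [Field K] (q : K) (n : ℕ) : K :=
  ∏ j ∈ Finset.range n, (1 - q ^ (j + 1))

/-- The two-variable Rogers-Szegő polynomial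
`H_n(t_1,t_2) = Σ_{k_1+k_2+k_3=n} C(n; k_1,k_2,k_3)_q t_1^{k_1} t_2^{k_2}`. -/
noncomputable def rogersSzego2 {K : Type*} [Field K] (q : K) (n : ℕ) (t₁ t₂ : K) : K :=
  ∑ k ∈ Finset.Nat.antidiagonalTuple 3 n,
    (qPoch q n / (qPoch q (k 0) * qPoch q (k 1) * qPoch q (k 2))) * t₁ ^ k 0 * t₂ ^ k 1

abbrev QQ : Type := RatFunc ℚ
noncomputable abbrev qX : QQ := RatFunc.X

lemma one_sub_pow_ne_zero (m : ℕ) (hm : 1 ≤ m) : (1 : QQ) - qX ^ m ≠ 0 := by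
  intro h
  have : (qX : QQ) ^ m = 1 := by linear_combination -h
  rw [show (qX : QQ) = algebraMap (Polynomial ℚ) QQ Polynomial.X from (RatFunc.algebraMap_X).symm,
    ← map_pow, ← map_one (algebraMap (Polynomial ℚ) QQ)] at this
  have := RatFunc.algebraMap_injective ℚ this
  have hd := congrArg Polynomial.natDegree this
  simp [Polynomial.natDegree_X_pow] at hd
  omega

lemma qPoch_ne_zero (n : ℕ) : qPoch qX n ≠ 0 := by
  unfold qPoch
  exact Finset.prod_ne_zero_iff.2 fun j _ => one_sub_pow_ne_zero _ (by omega)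

lemma qPoch_zero : qPoch qX 0 = 1 := by simp [qPoch]

lemma qPoch_succ (n : ℕ) : qPoch qX (n + 1) = qPoch qX n * (1 - qX ^ (n + 1)) := by
  unfold qPoch; rw [Finset.prod_range_succ]

set_option maxHeartbeats 1000000 in
lemma aux1 {F : Type*} [Field F] (A B M K x y z q : F)
    (hA : A ≠ 0) (hB : B ≠ 0) (hM : M ≠ 0)
    (h1 : 1 - x*q ≠ 0) (h2 : 1 - y*q ≠ 0) (h3 : 1 - z*q ≠ 0) :
    K*((1-x*y*z*q)*(1-x*y*z*q^2)*(1-x*y*z*q^3)) /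
        ((A*(1-x*q)) * (B*(1-y*q)) * (M*(1-z*q))) =
      K*((1-x*y*z*q)*(1-x*y*z*q^2)) / ((A*(1-x*q)) * (B*(1-y*q)) * M)
      + K*((1-x*y*z*q)*(1-x*y*z*q^2)) / (A * (B*(1-y*q)) * (M*(1-z*q)))
      + K*((1-x*y*z*q)*(1-x*y*z*q^2)) / ((A*(1-x*q)) * B * (M*(1-z*q)))
      + (x*y*z*q^2 - 1) *
          (K*(1-x*y*z*q) / (A * B * (M*(1-z*q)))
           + K*(1-x*y*z*q) / (A * (B*(1-y*q)) * M)
           + K*(1-x*y*z*q) / ((A*(1-x*q)) * B * M))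
      + (x*y*z*q^2 - 1) * (x*y*z*q - 1) * (K / (A*B*M)) := by
  set D : F := (A*(1-x*q)) * (B*(1-y*q)) * (M*(1-z*q)) with hDdef
  have hD : D ≠ 0 := by
    exact mul_ne_zero (mul_ne_zero (mul_ne_zero hA h1) (mul_ne_zero hB h2)) (mul_ne_zero hM h3)
  have e1 : K*((1-x*y*z*q)*(1-x*y*z*q^2)) / ((A*(1-x*q)) * (B*(1-y*q)) * M)
      = K*((1-x*y*z*q)*(1-x*y*z*q^2))*(1-z*q) / D := by
    rw [div_eq_div_iff (mul_ne_zero (mul_ne_zero (mul_ne_zero hA h1) (mul_ne_zero hB h2)) hM) hD,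
      hDdef]; ring
  have e2 : K*((1-x*y*z*q)*(1-x*y*z*q^2)) / (A * (B*(1-y*q)) * (M*(1-z*q)))
      = K*((1-x*y*z*q)*(1-x*y*z*q^2))*(1-x*q) / D := by
    rw [div_eq_div_iff (mul_ne_zero (mul_ne_zero hA (mul_ne_zero hB h2)) (mul_ne_zero hM h3)) hD,
      hDdef]; ring
  have e3 : K*((1-x*y*z*q)*(1-x*y*z*q^2)) / ((A*(1-x*q)) * B * (M*(1-z*q)))
      = K*((1-x*y*z*q)*(1-x*y*z*q^2))*(1-y*q) / D := by
    rw [div_eq_div_iff (mul_ne_zero (mul_ne_zero (mul_ne_zero hA h1) hB) (mul_ne_zero hM h3)) hD,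
      hDdef]; ring
  have e4 : K*(1-x*y*z*q) / (A * B * (M*(1-z*q)))
      = K*(1-x*y*z*q)*((1-x*q)*(1-y*q)) / D := by
    rw [div_eq_div_iff (mul_ne_zero (mul_ne_zero hA hB) (mul_ne_zero hM h3)) hD, hDdef]; ring
  have e5 : K*(1-x*y*z*q) / (A * (B*(1-y*q)) * M)
      = K*(1-x*y*z*q)*((1-x*q)*(1-z*q)) / D := by
    rw [div_eq_div_iff (mul_ne_zero (mul_ne_zero hA (mul_ne_zero hB h2)) hM) hD, hDdef]; ring
  have e6 : K*(1-x*y*z*q) / ((A*(1-x*q)) * B * M)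
      = K*(1-x*y*z*q)*((1-y*q)*(1-z*q)) / D := by
    rw [div_eq_div_iff (mul_ne_zero (mul_ne_zero (mul_ne_zero hA h1) hB) hM) hD, hDdef]; ring
  have e7 : K / (A*B*M) = K*((1-x*q)*(1-y*q)*(1-z*q)) / D := by
    rw [div_eq_div_iff (mul_ne_zero (mul_ne_zero hA hB) hM) hD, hDdef]; ring
  rw [e1, e2, e3, e4, e5, e6, e7]
  simp only [← mul_div_assoc, ← add_div]
  rw [div_eq_div_iff hD hD, hDdef]
  ring

set_option maxHeartbeats 1000000 in
lemma aux2 {F : Type*} [Field F] (A B K x y q : F)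
    (hA : A ≠ 0) (hB : B ≠ 0) (h1 : 1 - x*q ≠ 0) (h2 : 1 - y*q ≠ 0) :
    K*((1-x*y*q)*(1-x*y*q^2)) / ((A*(1-x*q)) * (B*(1-y*q))) =
      K*(1-x*y*q) / ((A*(1-x*q)) * B) + K*(1-x*y*q) / (A * (B*(1-y*q)))
      + (x*y*q - 1) * (K / (A*B)) := by
  set D : F := (A*(1-x*q)) * (B*(1-y*q)) with hDdef
  have hD : D ≠ 0 := mul_ne_zero (mul_ne_zero hA h1) (mul_ne_zero hB h2)
  have e1 : K*(1-x*y*q) / ((A*(1-x*q)) * B) = K*(1-x*y*q)*(1-y*q) / D := by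
    rw [div_eq_div_iff (mul_ne_zero (mul_ne_zero hA h1) hB) hD, hDdef]; ring
  have e2 : K*(1-x*y*q) / (A * (B*(1-y*q))) = K*(1-x*y*q)*(1-x*q) / D := by
    rw [div_eq_div_iff (mul_ne_zero hA (mul_ne_zero hB h2)) hD, hDdef]; ring
  have e3 : K / (A*B) = K*((1-x*q)*(1-y*q)) / D := by
    rw [div_eq_div_iff (mul_ne_zero hA hB) hD, hDdef]; ring
  rw [e1, e2, e3]
  simp only [← mul_div_assoc, ← add_div]
  rw [div_eq_div_iff hD hD, hDdef]
  ring

set_option maxHeartbeats 1000000 in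
lemma caseBB (a b m : ℕ) :
    qPoch qX (a+b+m+3) / (qPoch qX (a+1) * qPoch qX (b+1) * qPoch qX (m+1)) =
      qPoch qX (a+b+m+2) / (qPoch qX (a+1) * qPoch qX (b+1) * qPoch qX m)
      + qPoch qX (a+b+m+2) / (qPoch qX a * qPoch qX (b+1) * qPoch qX (m+1))
      + qPoch qX (a+b+m+2) / (qPoch qX (a+1) * qPoch qX b * qPoch qX (m+1))
      + (qX^(a+b+m+2) - 1) *
          (qPoch qX (a+b+m+1) / (qPoch qX a * qPoch qX b * qPoch qX (m+1))
           + qPoch qX (a+b+m+1) / (qPoch qX a * qPoch qX (b+1) * qPoch qX m)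
           + qPoch qX (a+b+m+1) / (qPoch qX (a+1) * qPoch qX b * qPoch qX m))
      + (qX^(a+b+m+2) - 1) * (qX^(a+b+m+1) - 1) *
          (qPoch qX (a+b+m) / (qPoch qX a * qPoch qX b * qPoch qX m)) := by
  have h1 : (1:QQ) - qX^a * qX ≠ 0 := by
    simpa [pow_succ] using one_sub_pow_ne_zero (a+1) (by omega)
  have h2 : (1:QQ) - qX^b * qX ≠ 0 := by
    simpa [pow_succ] using one_sub_pow_ne_zero (b+1) (by omega)
  have h3 : (1:QQ) - qX^m * qX ≠ 0 := by
    simpa [pow_succ] using one_sub_pow_ne_zero (m+1) (by omega)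
  have key := aux1 (qPoch qX a) (qPoch qX b) (qPoch qX m) (qPoch qX (a+b+m))
    (qX^a) (qX^b) (qX^m) qX (qPoch_ne_zero a) (qPoch_ne_zero b) (qPoch_ne_zero m) h1 h2 h3
  have eK3 : qPoch qX (a+b+m+3) = qPoch qX (a+b+m) *
      ((1-qX^a*qX^b*qX^m*qX)*(1-qX^a*qX^b*qX^m*qX^2)*(1-qX^a*qX^b*qX^m*qX^3)) := by
    rw [show a+b+m+3 = (a+b+m+2)+1 from rfl, qPoch_succ,
      show a+b+m+2 = (a+b+m+1)+1 from rfl, qPoch_succ, qPoch_succ]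
    simp only [pow_add]; ring
  have eK2 : qPoch qX (a+b+m+2) = qPoch qX (a+b+m) *
      ((1-qX^a*qX^b*qX^m*qX)*(1-qX^a*qX^b*qX^m*qX^2)) := by
    rw [show a+b+m+2 = (a+b+m+1)+1 from rfl, qPoch_succ, qPoch_succ]
    simp only [pow_add]; ring
  have eK1 : qPoch qX (a+b+m+1) = qPoch qX (a+b+m) * (1-qX^a*qX^b*qX^m*qX) := by
    rw [qPoch_succ]; simp only [pow_add, pow_one]
  have ea : qPoch qX (a+1) = qPoch qX a * (1-qX^a*qX) := by
    rw [qPoch_succ]; simp only [pow_add, pow_one]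
  have eb : qPoch qX (b+1) = qPoch qX b * (1-qX^b*qX) := by
    rw [qPoch_succ]; simp only [pow_add, pow_one]
  have em : qPoch qX (m+1) = qPoch qX m * (1-qX^m*qX) := by
    rw [qPoch_succ]; simp only [pow_add, pow_one]
  rw [eK3, eK2, eK1, ea, eb, em]
  linear_combination key

set_option maxHeartbeats 1000000 in
lemma case2 (a m : ℕ) :
    qPoch qX (a+m+2) / (qPoch qX (a+1) * qPoch qX (m+1)) =
      qPoch qX (a+m+1) / (qPoch qX (a+1) * qPoch qX m)
      + qPoch qX (a+m+1) / (qPoch qX a * qPoch qX (m+1))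
      + (qX^(a+m+1) - 1) * (qPoch qX (a+m) / (qPoch qX a * qPoch qX m)) := by
  have h1 : (1:QQ) - qX^a * qX ≠ 0 := by
    simpa [pow_succ] using one_sub_pow_ne_zero (a+1) (by omega)
  have h3 : (1:QQ) - qX^m * qX ≠ 0 := by
    simpa [pow_succ] using one_sub_pow_ne_zero (m+1) (by omega)
  have key := aux2 (qPoch qX a) (qPoch qX m) (qPoch qX (a+m)) (qX^a) (qX^m) qX
    (qPoch_ne_zero a) (qPoch_ne_zero m) h1 h3
  have eK2 : qPoch qX (a+m+2) = qPoch qX (a+m) *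
      ((1-qX^a*qX^m*qX)*(1-qX^a*qX^m*qX^2)) := by
    rw [show a+m+2 = (a+m+1)+1 from rfl, qPoch_succ, qPoch_succ]
    simp only [pow_add]; ring
  have eK1 : qPoch qX (a+m+1) = qPoch qX (a+m) * (1-qX^a*qX^m*qX) := by
    rw [qPoch_succ]; simp only [pow_add, pow_one]
  have ea : qPoch qX (a+1) = qPoch qX a * (1-qX^a*qX) := by
    rw [qPoch_succ]; simp only [pow_add, pow_one]
  have em : qPoch qX (m+1) = qPoch qX m * (1-qX^m*qX) := by
    rw [qPoch_succ]; simp only [pow_add, pow_one]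
  rw [eK2, eK1, ea, em]
  linear_combination key

noncomputable def Dc (n a b : ℕ) : QQ :=
  if a + b ≤ n then qPoch qX n / (qPoch qX a * qPoch qX b * qPoch qX (n - a - b)) else 0

lemma Dc_eq {n a b : ℕ} (c : ℕ) (h : a + b + c = n) :
    Dc n a b = qPoch qX n / (qPoch qX a * qPoch qX b * qPoch qX c) := by
  unfold Dc
  rw [if_pos (by omega), show n - a - b = c from by omega]

lemma Dc_zero {n a b : ℕ} (h : n < a + b) : Dc n a b = 0 := by
  unfold Dc; rw [if_neg (by omega)]

noncomputable def sh1 (f : ℕ → ℕ → QQ) (a b : ℕ) : QQ := if a = 0 then 0 else f (a-1) b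
noncomputable def sh2 (f : ℕ → ℕ → QQ) (a b : ℕ) : QQ := if b = 0 then 0 else f a (b-1)

lemma sh1_zero (f : ℕ → ℕ → QQ) (b : ℕ) : sh1 f 0 b = 0 := if_pos rfl
lemma sh1_succ (f : ℕ → ℕ → QQ) (a b : ℕ) : sh1 f (a+1) b = f a b := by simp [sh1]
lemma sh2_zero (f : ℕ → ℕ → QQ) (a : ℕ) : sh2 f a 0 = 0 := if_pos rfl
lemma sh2_succ (f : ℕ → ℕ → QQ) (a b : ℕ) : sh2 f a (b+1) = f a b := by simp [sh2]

lemma core (n : ℕ) (hn : 2 ≤ n) (a b : ℕ) :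
    Dc (n+1) a b =
      Dc n a b + sh1 (Dc n) a b + sh2 (Dc n) a b
      + (qX^n - 1) * (sh1 (sh2 (Dc (n-1))) a b + sh1 (Dc (n-1)) a b + sh2 (Dc (n-1)) a b)
      + (qX^n - 1) * (qX^(n-1) - 1) * sh1 (sh2 (Dc (n-2))) a b := by
  rcases a with _ | a <;> rcases b with _ | b <;>
    simp only [sh1_zero, sh1_succ, sh2_zero, sh2_succ]
  · -- a = 0, b = 0
    have e0 : Dc (n+1) 0 0 = qPoch qX (n+1) / (qPoch qX 0 * qPoch qX 0 * qPoch qX (n+1)) :=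
      Dc_eq (n+1) (by omega)
    have e1 : Dc n 0 0 = qPoch qX n / (qPoch qX 0 * qPoch qX 0 * qPoch qX n) :=
      Dc_eq n (by omega)
    rw [e0, e1, qPoch_zero]
    simp only [one_mul]
    rw [div_self (qPoch_ne_zero (n+1)), div_self (qPoch_ne_zero n)]
    ring
  · -- a = 0, b = b+1
    rcases Nat.lt_or_ge n (b+1) with hbn | hbn
    · rcases Nat.eq_or_lt_of_le (Nat.succ_le_of_lt hbn) with hb1 | hb1
      · -- b = n
        have hsub : n = b := by omega
        subst hsub
        have e0 : Dc (n+1) 0 (n+1) = qPoch qX (n+1) / (qPoch qX 0 * qPoch qX (n+1) * qPoch qX 0) :=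
          Dc_eq 0 (by omega)
        have e1 : Dc n 0 (n+1) = 0 := Dc_zero (by omega)
        have e2 : Dc n 0 n = qPoch qX n / (qPoch qX 0 * qPoch qX n * qPoch qX 0) :=
          Dc_eq 0 (by omega)
        have e3 : Dc (n-1) 0 n = 0 := Dc_zero (by omega)
        rw [e0, e1, e2, e3, qPoch_zero]
        simp only [one_mul, mul_one]
        rw [div_self (qPoch_ne_zero (n+1)), div_self (qPoch_ne_zero n)]
        ring
      · have e0 : Dc (n+1) 0 (b+1) = 0 := Dc_zero (by omega)
        have e1 : Dc n 0 (b+1) = 0 := Dc_zero (by omega)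
        have e2 : Dc n 0 b = 0 := Dc_zero (by omega)
        have e3 : Dc (n-1) 0 b = 0 := Dc_zero (by omega)
        rw [e0, e1, e2, e3]
        ring
    · -- b+1 ≤ n : n = b + m + 1
      obtain ⟨m, rfl⟩ : ∃ m, n = b + m + 1 := ⟨n - b - 1, by omega⟩
      have e0 : Dc (b+m+1+1) 0 (b+1) =
          qPoch qX (b+m+2) / (qPoch qX 0 * qPoch qX (b+1) * qPoch qX (m+1)) := Dc_eq (m+1) (by omega)
      have e1 : Dc (b+m+1) 0 (b+1) =
          qPoch qX (b+m+1) / (qPoch qX 0 * qPoch qX (b+1) * qPoch qX m) := Dc_eq m (by omega)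
      have e2 : Dc (b+m+1) 0 b =
          qPoch qX (b+m+1) / (qPoch qX 0 * qPoch qX b * qPoch qX (m+1)) := Dc_eq (m+1) (by omega)
      have e3 : Dc (b+m+1-1) 0 b =
          qPoch qX (b+m) / (qPoch qX 0 * qPoch qX b * qPoch qX m) := by
        rw [show b+m+1-1 = b+m from rfl]; exact Dc_eq m (by omega)
      rw [e0, e1, e2, e3, qPoch_zero]
      simp only [one_mul]
      linear_combination case2 b m
  · -- a = a+1, b = 0
    rcases Nat.lt_or_ge n (a+1) with han | han
    · rcases Nat.eq_or_lt_of_le (Nat.succ_le_of_lt han) with ha1 | ha1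
      · have hsub : n = a := by omega
        subst hsub
        have e0 : Dc (n+1) (n+1) 0 = qPoch qX (n+1) / (qPoch qX (n+1) * qPoch qX 0 * qPoch qX 0) :=
          Dc_eq 0 (by omega)
        have e1 : Dc n (n+1) 0 = 0 := Dc_zero (by omega)
        have e2 : Dc n n 0 = qPoch qX n / (qPoch qX n * qPoch qX 0 * qPoch qX 0) :=
          Dc_eq 0 (by omega)
        have e3 : Dc (n-1) n 0 = 0 := Dc_zero (by omega)
        rw [e0, e1, e2, e3, qPoch_zero]
        simp only [one_mul, mul_one]
        rw [div_self (qPoch_ne_zero (n+1)), div_self (qPoch_ne_zero n)]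
        ring
      · have e0 : Dc (n+1) (a+1) 0 = 0 := Dc_zero (by omega)
        have e1 : Dc n (a+1) 0 = 0 := Dc_zero (by omega)
        have e2 : Dc n a 0 = 0 := Dc_zero (by omega)
        have e3 : Dc (n-1) a 0 = 0 := Dc_zero (by omega)
        rw [e0, e1, e2, e3]
        ring
    · obtain ⟨m, rfl⟩ : ∃ m, n = a + m + 1 := ⟨n - a - 1, by omega⟩
      have e0 : Dc (a+m+1+1) (a+1) 0 =
          qPoch qX (a+m+2) / (qPoch qX (a+1) * qPoch qX 0 * qPoch qX (m+1)) := Dc_eq (m+1) (by omega)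
      have e1 : Dc (a+m+1) (a+1) 0 =
          qPoch qX (a+m+1) / (qPoch qX (a+1) * qPoch qX 0 * qPoch qX m) := Dc_eq m (by omega)
      have e2 : Dc (a+m+1) a 0 =
          qPoch qX (a+m+1) / (qPoch qX a * qPoch qX 0 * qPoch qX (m+1)) := Dc_eq (m+1) (by omega)
      have e3 : Dc (a+m+1-1) a 0 =
          qPoch qX (a+m) / (qPoch qX a * qPoch qX 0 * qPoch qX m) := by
        rw [show a+m+1-1 = a+m from rfl]; exact Dc_eq m (by omega)
      rw [e0, e1, e2, e3, qPoch_zero]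
      simp only [one_mul, mul_one]
      linear_combination case2 a m
  · -- a = a+1, b = b+1
    rcases Nat.lt_or_ge n (a+b+2) with hs | hs
    · rcases Nat.eq_or_lt_of_le (Nat.succ_le_of_lt hs) with hs1 | hs1
      · -- n = a+b+1
        obtain rfl : n = a + b + 1 := by omega
        have e0 : Dc (a+b+1+1) (a+1) (b+1) =
            qPoch qX (a+b+2) / (qPoch qX (a+1) * qPoch qX (b+1) * qPoch qX 0) := Dc_eq 0 (by omega)
        have e1 : Dc (a+b+1) (a+1) (b+1) = 0 := Dc_zero (by omega)
        have e2 : Dc (a+b+1) a (b+1) =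
            qPoch qX (a+b+1) / (qPoch qX a * qPoch qX (b+1) * qPoch qX 0) := Dc_eq 0 (by omega)
        have e3 : Dc (a+b+1) (a+1) b =
            qPoch qX (a+b+1) / (qPoch qX (a+1) * qPoch qX b * qPoch qX 0) := Dc_eq 0 (by omega)
        have e4 : Dc (a+b+1-1) a b =
            qPoch qX (a+b) / (qPoch qX a * qPoch qX b * qPoch qX 0) := by
          rw [show a+b+1-1 = a+b from rfl]; exact Dc_eq 0 (by omega)
        have e5 : Dc (a+b+1-1) a (b+1) = 0 := by
          rw [show a+b+1-1 = a+b from rfl]; exact Dc_zero (by omega)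
        have e6 : Dc (a+b+1-1) (a+1) b = 0 := by
          rw [show a+b+1-1 = a+b from rfl]; exact Dc_zero (by omega)
        have e7 : Dc (a+b+1-2) a b = 0 := by
          rw [show a+b+1-2 = a+b-1 from rfl]; exact Dc_zero (by omega)
        rw [e0, e1, e2, e3, e4, e5, e6, e7, qPoch_zero]
        simp only [mul_one]
        linear_combination case2 a b
      · have e0 : Dc (n+1) (a+1) (b+1) = 0 := Dc_zero (by omega)
        have e1 : Dc n (a+1) (b+1) = 0 := Dc_zero (by omega)
        have e2 : Dc n a (b+1) = 0 := Dc_zero (by omega)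
        have e3 : Dc n (a+1) b = 0 := Dc_zero (by omega)
        have e4 : Dc (n-1) a b = 0 := Dc_zero (by omega)
        have e5 : Dc (n-1) a (b+1) = 0 := Dc_zero (by omega)
        have e6 : Dc (n-1) (a+1) b = 0 := Dc_zero (by omega)
        have e7 : Dc (n-2) a b = 0 := Dc_zero (by omega)
        rw [e0, e1, e2, e3, e4, e5, e6, e7]
        ring
    · -- n = a+b+m+2
      obtain ⟨m, rfl⟩ : ∃ m, n = a + b + m + 2 := ⟨n - a - b - 2, by omega⟩
      simp only [show a+b+m+2-1 = a+b+m+1 from rfl, show a+b+m+2-2 = a+b+m from rfl]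
      have e0 : Dc (a+b+m+2+1) (a+1) (b+1) =
          qPoch qX (a+b+m+3) / (qPoch qX (a+1) * qPoch qX (b+1) * qPoch qX (m+1)) :=
        Dc_eq (m+1) (by omega)
      have e1 : Dc (a+b+m+2) (a+1) (b+1) =
          qPoch qX (a+b+m+2) / (qPoch qX (a+1) * qPoch qX (b+1) * qPoch qX m) :=
        Dc_eq m (by omega)
      have e2 : Dc (a+b+m+2) a (b+1) =
          qPoch qX (a+b+m+2) / (qPoch qX a * qPoch qX (b+1) * qPoch qX (m+1)) :=
        Dc_eq (m+1) (by omega)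
      have e3 : Dc (a+b+m+2) (a+1) b =
          qPoch qX (a+b+m+2) / (qPoch qX (a+1) * qPoch qX b * qPoch qX (m+1)) :=
        Dc_eq (m+1) (by omega)
      have e4 : Dc (a+b+m+1) a b =
          qPoch qX (a+b+m+1) / (qPoch qX a * qPoch qX b * qPoch qX (m+1)) := Dc_eq (m+1) (by omega)
      have e5 : Dc (a+b+m+1) a (b+1) =
          qPoch qX (a+b+m+1) / (qPoch qX a * qPoch qX (b+1) * qPoch qX m) := Dc_eq m (by omega)
      have e6 : Dc (a+b+m+1) (a+1) b =
          qPoch qX (a+b+m+1) / (qPoch qX (a+1) * qPoch qX b * qPoch qX m) := Dc_eq m (by omega)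
      have e7 : Dc (a+b+m) a b =
          qPoch qX (a+b+m) / (qPoch qX a * qPoch qX b * qPoch qX m) := Dc_eq m (by omega)
      rw [e0, e1, e2, e3, e4, e5, e6, e7]
      linear_combination caseBB a b m

lemma rep (m N : ℕ) (h : m < N) (t₁ t₂ : QQ) :
    rogersSzego2 qX m t₁ t₂ =
      ∑ a ∈ Finset.range N, ∑ b ∈ Finset.range N, Dc m a b * t₁^a * t₂^b := by
  rw [← Finset.sum_product']
  unfold rogersSzego2
  rw [← Finset.sum_subset
    (Finset.filter_subset (fun p : ℕ × ℕ => p.1 + p.2 ≤ m) (Finset.range N ×ˢ Finset.range N))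
    (by
      intro p _ hp
      rw [Finset.mem_filter] at hp
      have : ¬ (p.1 + p.2 ≤ m) := fun hc => hp ⟨by assumption, hc⟩
      rw [Dc_zero (by omega), zero_mul, zero_mul])]
  refine Finset.sum_nbij' (fun k => (k 0, k 1))
    (fun p => ![p.1, p.2, m - p.1 - p.2]) ?_ ?_ ?_ ?_ ?_
  · intro k hk
    rw [Finset.Nat.mem_antidiagonalTuple] at hk
    rw [Fin.sum_univ_three] at hk
    simp only [Finset.mem_filter, Finset.mem_product, Finset.mem_range]
    exact ⟨⟨by omega, by omega⟩, by omega⟩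
  · intro p hp
    rw [Finset.mem_filter] at hp
    rw [Finset.Nat.mem_antidiagonalTuple, Fin.sum_univ_three]
    simp only [Matrix.cons_val_zero, Matrix.cons_val_one, Matrix.head_cons,
      Matrix.cons_val_two, Matrix.tail_cons]
    omega
  · intro k hk
    rw [Finset.Nat.mem_antidiagonalTuple, Fin.sum_univ_three] at hk
    funext x
    fin_cases x <;> simp <;> omega
  · intro p hp
    simp
  · intro k hk
    rw [Finset.Nat.mem_antidiagonalTuple, Fin.sum_univ_three] at hk
    dsimp only
    rw [Dc_eq (k 2) (by omega)]

lemma shift1 (f : ℕ → ℕ → QQ) (M : ℕ) (hf : ∀ b, f M b = 0) (t₁ t₂ : QQ) :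
    t₁ * ∑ a ∈ Finset.range (M+1), ∑ b ∈ Finset.range (M+1), f a b * t₁^a * t₂^b
      = ∑ a ∈ Finset.range (M+1), ∑ b ∈ Finset.range (M+1), sh1 f a b * t₁^a * t₂^b := by
  calc t₁ * ∑ a ∈ Finset.range (M+1), ∑ b ∈ Finset.range (M+1), f a b * t₁^a * t₂^b
      = ∑ a ∈ Finset.range (M+1), ∑ b ∈ Finset.range (M+1), f a b * t₁^(a+1) * t₂^b := by
        rw [Finset.mul_sum]
        refine Finset.sum_congr rfl fun a _ => ?_
        rw [Finset.mul_sum]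
        exact Finset.sum_congr rfl fun b _ => by ring
    _ = ∑ a ∈ Finset.range M, ∑ b ∈ Finset.range (M+1), f a b * t₁^(a+1) * t₂^b := by
        rw [Finset.sum_range_succ]
        simp [hf]
    _ = ∑ a ∈ Finset.range (M+1), ∑ b ∈ Finset.range (M+1), sh1 f a b * t₁^a * t₂^b := by
        rw [Finset.sum_range_succ'
          (fun a => ∑ b ∈ Finset.range (M+1), sh1 f a b * t₁^a * t₂^b) M]
        simp [sh1_zero, sh1_succ]

lemma shift2 (f : ℕ → ℕ → QQ) (M : ℕ) (hf : ∀ a, f a M = 0) (t₁ t₂ : QQ) :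
    t₂ * ∑ a ∈ Finset.range (M+1), ∑ b ∈ Finset.range (M+1), f a b * t₁^a * t₂^b
      = ∑ a ∈ Finset.range (M+1), ∑ b ∈ Finset.range (M+1), sh2 f a b * t₁^a * t₂^b := by
  calc t₂ * ∑ a ∈ Finset.range (M+1), ∑ b ∈ Finset.range (M+1), f a b * t₁^a * t₂^b
      = ∑ a ∈ Finset.range (M+1), ∑ b ∈ Finset.range (M+1), f a b * t₁^a * t₂^(b+1) := by
        rw [Finset.mul_sum]
        refine Finset.sum_congr rfl fun a _ => ?_
        rw [Finset.mul_sum]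
        exact Finset.sum_congr rfl fun b _ => by ring
    _ = ∑ a ∈ Finset.range (M+1), ∑ b ∈ Finset.range M, f a b * t₁^a * t₂^(b+1) := by
        refine Finset.sum_congr rfl fun a _ => ?_
        rw [Finset.sum_range_succ]
        simp [hf]
    _ = ∑ a ∈ Finset.range (M+1), ∑ b ∈ Finset.range (M+1), sh2 f a b * t₁^a * t₂^b := by
        refine Finset.sum_congr rfl fun a _ => ?_
        rw [Finset.sum_range_succ'
          (fun b => sh2 f a b * t₁^a * t₂^b) M]
        simp [sh2_zero, sh2_succ]


/-- `H_{n+1}(t_1,t_2) = (1+t_1+t_2)H_n + (t_1t_2+t_1+t_2)(q^n-1)H_{n-1}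
+ t_1t_2(q^n-1)(q^{n-1}-1)H_{n-2}` for `n ≥ 2`. -/
theorem rogersSzego2_recursion (n : ℕ) (hn : 2 ≤ n) (t₁ t₂ : RatFunc ℚ) :
    rogersSzego2 (RatFunc.X : RatFunc ℚ) (n + 1) t₁ t₂ =
      (1 + t₁ + t₂) * rogersSzego2 (RatFunc.X : RatFunc ℚ) n t₁ t₂ +
        (t₁ * t₂ + t₁ + t₂) * ((RatFunc.X : RatFunc ℚ) ^ n - 1) *
          rogersSzego2 (RatFunc.X : RatFunc ℚ) (n - 1) t₁ t₂ +
        t₁ * t₂ * ((RatFunc.X : RatFunc ℚ) ^ n - 1) * ((RatFunc.X : RatFunc ℚ) ^ (n - 1) - 1) *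
          rogersSzego2 (RatFunc.X : RatFunc ℚ) (n - 2) t₁ t₂ := by
  have R3 := rep (n+1) (n+2) (by omega) t₁ t₂
  have R0 := rep n (n+2) (by omega) t₁ t₂
  have R1 := rep (n-1) (n+2) (by omega) t₁ t₂
  have R2 := rep (n-2) (n+2) (by omega) t₁ t₂
  have E1 := shift1 (Dc n) (n+1) (fun b => Dc_zero (by omega)) t₁ t₂
  have E2 := shift2 (Dc n) (n+1) (fun a => Dc_zero (by omega)) t₁ t₂
  have E3 := shift2 (Dc (n-1)) (n+1) (fun a => Dc_zero (by omega)) t₁ t₂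
  have E4 := shift1 (Dc (n-1)) (n+1) (fun b => Dc_zero (by omega)) t₁ t₂
  have E3' := shift2 (Dc (n-2)) (n+1) (fun a => Dc_zero (by omega)) t₁ t₂
  have E5 := shift1 (sh2 (Dc (n-1))) (n+1)
    (fun b => by
      rcases b with _ | b
      · exact sh2_zero _ _
      · rw [sh2_succ]; exact Dc_zero (by omega)) t₁ t₂
  have E6 := shift1 (sh2 (Dc (n-2))) (n+1)
    (fun b => by
      rcases b with _ | b
      · exact sh2_zero _ _
      · rw [sh2_succ]; exact Dc_zero (by omega)) t₁ t₂
  rw [show n+1+1 = n+2 from rfl] at E1 E2 E3 E4 E3' E5 E6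
  have SPLIT : (∑ a ∈ Finset.range (n+2), ∑ b ∈ Finset.range (n+2),
        Dc (n+1) a b * t₁^a * t₂^b) =
      (∑ a ∈ Finset.range (n+2), ∑ b ∈ Finset.range (n+2), Dc n a b * t₁^a * t₂^b)
      + (∑ a ∈ Finset.range (n+2), ∑ b ∈ Finset.range (n+2), sh1 (Dc n) a b * t₁^a * t₂^b)
      + (∑ a ∈ Finset.range (n+2), ∑ b ∈ Finset.range (n+2), sh2 (Dc n) a b * t₁^a * t₂^b)
      + (qX^n - 1) *
          ((∑ a ∈ Finset.range (n+2), ∑ b ∈ Finset.range (n+2),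
              sh1 (sh2 (Dc (n-1))) a b * t₁^a * t₂^b)
           + (∑ a ∈ Finset.range (n+2), ∑ b ∈ Finset.range (n+2),
              sh1 (Dc (n-1)) a b * t₁^a * t₂^b)
           + (∑ a ∈ Finset.range (n+2), ∑ b ∈ Finset.range (n+2),
              sh2 (Dc (n-1)) a b * t₁^a * t₂^b))
      + (qX^n - 1) * (qX^(n-1) - 1) *
          (∑ a ∈ Finset.range (n+2), ∑ b ∈ Finset.range (n+2),
            sh1 (sh2 (Dc (n-2))) a b * t₁^a * t₂^b) := by
    simp only [Finset.mul_sum, ← Finset.sum_add_distrib]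
    refine Finset.sum_congr rfl fun a _ => Finset.sum_congr rfl fun b _ => ?_
    linear_combination (core n hn a b) * (t₁^a * t₂^b)
  rw [R3, R0, R1, R2]
  linear_combination SPLIT - E1 - E2 - (qX^n - 1) * (E5 + E4 + E3)
    - (qX^n - 1) * t₁ * E3 - (qX^n - 1) * (qX^(n-1) - 1) * E6
    - (qX^n - 1) * (qX^(n-1) - 1) * t₁ * E3'
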